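/- Fix natural numbers n ≥ 1 and k ≥ 1. There exists a function T : (Fin n → Bool) → ℝ such that for every p ∈ [0,1], ∑_{ω : Fin n → Bool} T(ω) · p^{N(ω)} · (1−p)^{n−N(ω)} = 1 − (1−p)^k, where N(ω) = #{i : ω(i) = true}, if and only if n ≥ k. In other words, pass@k is unbiasedly estimable from n i.i.d. samples if and only if n ≥ k. -/

import Mathlib

open Finset Polynomial

private lemma passk_sum_omega (n : ℕ) (g : ℕ → ℝ) :
    ∑ ω : Fin n → Bool, g (univ.filter fun i => ω i = true).card
      = ∑ m ∈ range (n+1), (n.choose m : ℝ) * g m := by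
  classical
  let e : (Fin n → Bool) ≃ Finset (Fin n) :=
    { toFun := fun ω => univ.filter fun i => ω i = true
      invFun := fun s i => decide (i ∈ s)
      left_inv := fun ω => by ext i; simp
      right_inv := fun s => by ext i; simp }
  calc ∑ ω : Fin n → Bool, g (univ.filter fun i => ω i = true).card
      = ∑ ω : Fin n → Bool, g (e ω).card := rfl
    _ = ∑ s : Finset (Fin n), g s.card := Equiv.sum_comp e (fun s => g s.card)
    _ = ∑ s ∈ (Finset.univ : Finset (Fin n)).powerset, g s.card := by
        rw [Finset.powerset_univ]
    _ = ∑ m ∈ range (n+1), (n.choose m : ℝ) * g m := by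
        rw [Finset.sum_powerset_apply_card]
        simp [nsmul_eq_mul, Finset.card_univ]

private lemma passk_binom_id (n k m : ℕ) (hk : k ≤ n) :
    n.choose m * (n-m).choose k = n.choose k * (n-k).choose m := by
  rcases le_or_gt (m + k) n with h | h
  · have h1 : n.choose (m+k) * (m+k).choose m = n.choose m * (n-m).choose k := by
      have := Nat.choose_mul (n := n) (k := m + k) (s := m) (Nat.le_add_right _ _)
      simpa using this
    have h2 : n.choose (m+k) * (m+k).choose k = n.choose k * (n-k).choose m := by
      have := Nat.choose_mul (n := n) (k := m + k) (s := k) (Nat.le_add_left _ _)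
      simpa using this
    rw [← h1, ← h2, Nat.choose_symm_add]
  · rcases le_or_gt m n with hm | hm
    · have h1 : (n - m).choose k = 0 := Nat.choose_eq_zero_of_lt (by omega)
      have h2 : (n - k).choose m = 0 := Nat.choose_eq_zero_of_lt (by omega)
      simp [h1, h2]
    · have h1 : n.choose m = 0 := Nat.choose_eq_zero_of_lt hm
      have h2 : (n - k).choose m = 0 := Nat.choose_eq_zero_of_lt (by omega)
      simp [h1, h2]

private lemma passk_aux_binom (N : ℕ) (p : ℝ) :
    ∑ m ∈ range (N+1), (N.choose m : ℝ) * p^m * (1-p)^(N-m) = 1 := by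
  have h := add_pow p (1-p) N
  simp only [add_sub_cancel, one_pow] at h
  calc ∑ m ∈ range (N+1), (N.choose m : ℝ) * p^m * (1-p)^(N-m)
      = ∑ m ∈ range (N+1), p^m * (1-p)^(N-m) * (N.choose m : ℝ) :=
        Finset.sum_congr rfl fun m _ => by ring
    _ = 1 := h.symm

private lemma passk_aux_sum (n k : ℕ) (hk : k ≤ n) (p : ℝ) :
    ∑ m ∈ range (n+1), ((n-k).choose m : ℝ) * p^m * (1-p)^(n-m) = (1-p)^k := by
  rw [← Finset.sum_subset (Finset.range_subset_range.2 (by omega : n - k + 1 ≤ n + 1))]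
  · have : ∀ m ∈ range (n-k+1),
        ((n-k).choose m : ℝ) * p^m * (1-p)^(n-m)
          = (1-p)^k * (((n-k).choose m : ℝ) * p^m * (1-p)^((n-k)-m)) := by
      intro m hm
      rw [mem_range] at hm
      have : n - m = (n - k - m) + k := by omega
      rw [this, pow_add]; ring
    rw [Finset.sum_congr rfl this, ← Finset.mul_sum, passk_aux_binom (n-k) p, mul_one]
  · intro m hm hm'
    rw [mem_range] at hm hm'
    have : (n-k).choose m = 0 := Nat.choose_eq_zero_of_lt (by omega)
    simp [this]

/-- For n ≥ 1 and k ≥ 1, there exists an unbiased estimator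
T : (Fin n → Bool) → ℝ of pass@k = 1 − (1−p)^k from n i.i.d. Bernoulli(p)
samples, i.e. ∑_ω T(ω)·p^{N(ω)}·(1−p)^{n−N(ω)} = 1 − (1−p)^k for all
p ∈ [0,1] where N(ω) counts successes, if and only if n ≥ k. -/
theorem passk_unbiased_estimable_iff_n_ge_k (n k : ℕ) (hn : 1 ≤ n) (hk : 1 ≤ k) :
    (∃ T : (Fin n → Bool) → ℝ, ∀ p ∈ Set.Icc (0 : ℝ) 1,
        ∑ ω : Fin n → Bool,
          T ω * p ^ (Finset.univ.filter fun i => ω i = true).card *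
            (1 - p) ^ (n - (Finset.univ.filter fun i => ω i = true).card)
          = 1 - (1 - p) ^ k)
    ↔ k ≤ n := by
  classical
  constructor
  · rintro ⟨T, hT⟩
    set P : ℝ[X] := ∑ ω : Fin n → Bool,
        Polynomial.C (T ω) * X ^ (Finset.univ.filter fun i => ω i = true).card *
          (1 - X) ^ (n - (Finset.univ.filter fun i => ω i = true).card) with hP
    set Q : ℝ[X] := 1 - (1 - X) ^ k with hQ
    have hroot : ∀ p ∈ Set.Icc (0:ℝ) 1, (P - Q).IsRoot p := by
      intro p hp
      have := hT p hp
      simp only [IsRoot, hP, hQ, eval_sub, eval_finset_sum, eval_mul, eval_pow, eval_C,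
        eval_X, eval_one, sub_eq_zero]
      simpa using this
    have hPQ : P = Q := by
      have : P - Q = 0 := Polynomial.eq_zero_of_infinite_isRoot _
        ((Set.Icc_infinite zero_lt_one).mono hroot)
      exact sub_eq_zero.mp this
    have h1X : (1 - X : ℝ[X]).natDegree = 1 := by
      have : (1 - X : ℝ[X]) = -(X - Polynomial.C 1) := by simp
      rw [this, natDegree_neg, natDegree_X_sub_C]
    have hdegpow : ((1 - X : ℝ[X]) ^ k).natDegree = k := by
      rw [natDegree_pow, h1X, mul_one]
    have hQdeg : Q.natDegree = k := by
      have : Q = -((1 - X) ^ k - 1) := by rw [hQ]; ring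
      rw [this, natDegree_neg, natDegree_sub_eq_left_of_natDegree_lt, hdegpow]
      rw [hdegpow, natDegree_one]
      omega
    have hPdeg : P.natDegree ≤ n := by
      rw [hP]
      apply natDegree_sum_le_of_forall_le
      intro ω _
      set m := (Finset.univ.filter fun i => ω i = true).card with hm
      have hmn : m ≤ n := by
        calc m ≤ (Finset.univ : Finset (Fin n)).card := Finset.card_filter_le _ _
          _ = n := by simp
      calc (Polynomial.C (T ω) * X ^ m * (1 - X) ^ (n - m)).natDegree
          ≤ (Polynomial.C (T ω) * X ^ m).natDegree + ((1 - X : ℝ[X]) ^ (n-m)).natDegree :=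
            natDegree_mul_le
        _ ≤ ((Polynomial.C (T ω)).natDegree + (X ^ m : ℝ[X]).natDegree)
              + ((1 - X : ℝ[X]) ^ (n-m)).natDegree :=
            Nat.add_le_add_right natDegree_mul_le _
        _ = m + (n - m) := by rw [natDegree_C, natDegree_X_pow, natDegree_pow, h1X]; omega
        _ ≤ n := by omega
    calc k = Q.natDegree := hQdeg.symm
      _ = P.natDegree := by rw [hPQ]
      _ ≤ n := hPdeg
  · intro hkn
    have hC : (0:ℝ) < (n.choose k : ℝ) := by exact_mod_cast Nat.choose_pos hkn
    refine ⟨fun ω => 1 - ((n - (Finset.univ.filter fun i => ω i = true).card).choose k : ℝ)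
        / (n.choose k : ℝ), ?_⟩
    intro p _
    set g : ℕ → ℝ := fun m => (1 - ((n-m).choose k : ℝ)/(n.choose k : ℝ)) * p^m * (1-p)^(n-m)
      with hg
    have key : ∑ ω : Fin n → Bool, g (univ.filter fun i => ω i = true).card
        = ∑ m ∈ range (n+1), (n.choose m : ℝ) * g m := passk_sum_omega n g
    have step : ∀ m ∈ range (n+1), (n.choose m : ℝ) * g m
        = (n.choose m : ℝ) * p^m * (1-p)^(n-m)
          - ((n-k).choose m : ℝ) * p^m * (1-p)^(n-m) := by
      intro m _
      have hid : ((n.choose m : ℝ) * ((n-m).choose k : ℝ)) = (n.choose k : ℝ) * ((n-k).choose m : ℝ) := by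
        exact_mod_cast passk_binom_id n k m hkn
      rw [hg]
      field_simp
      linear_combination (-(p ^ m * (1 - p) ^ (n - m))) * hid
    calc ∑ ω : Fin n → Bool,
          (fun ω => 1 - ((n - (Finset.univ.filter fun i => ω i = true).card).choose k : ℝ)
            / (n.choose k : ℝ)) ω * p ^ (Finset.univ.filter fun i => ω i = true).card *
            (1 - p) ^ (n - (Finset.univ.filter fun i => ω i = true).card)
        = ∑ ω : Fin n → Bool, g (univ.filter fun i => ω i = true).card := rfl
      _ = ∑ m ∈ range (n+1), (n.choose m : ℝ) * g m := key
      _ = ∑ m ∈ range (n+1), ((n.choose m : ℝ) * p^m * (1-p)^(n-m)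
            - ((n-k).choose m : ℝ) * p^m * (1-p)^(n-m)) := Finset.sum_congr rfl step
      _ = (∑ m ∈ range (n+1), (n.choose m : ℝ) * p^m * (1-p)^(n-m))
            - ∑ m ∈ range (n+1), ((n-k).choose m : ℝ) * p^m * (1-p)^(n-m) :=
          Finset.sum_sub_distrib _ _
      _ = 1 - (1-p)^k := by rw [passk_aux_binom n p, passk_aux_sum n k hkn p]
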